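/- Every root of Lehmer's polynomial P₁₀ reduced modulo 2 in the field 𝔽₃₂ (equivalently, in an algebraic closure of 𝔽₂) is a primitive 31st root of unity, and the ten roots are pairwise distinct. -/

import Mathlib

open Polynomial

/-- Lehmer's polynomial. -/
noncomputable def P10 : Polynomial ℤ :=
  X ^ 10 + X ^ 9 - X ^ 7 - X ^ 6 - X ^ 5 - X ^ 4 - X ^ 3 + X + 1

/-- Lehmer's polynomial reduced modulo 2, in an algebraic closure of 𝔽₂. -/
noncomputable def P10bar : Polynomial (AlgebraicClosure (ZMod 2)) :=
  P10.map (Int.castRingHom (AlgebraicClosure (ZMod 2)))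

noncomputable def Qaux : Polynomial ℤ :=
  1 + X + X ^ 2 + X ^ 5 + X ^ 7 + X ^ 9 + X ^ 10 + X ^ 11 + X ^ 12 + X ^ 14 + X ^ 16 + X ^ 19 + X ^ 20 + X ^ 21

noncomputable def Raux : Polynomial ℤ :=
  -1 - X - X ^ 2 + X ^ 4 + X ^ 5 + X ^ 6 + X ^ 7 + X ^ 8 - X ^ 10 - X ^ 11 + X ^ 13 + X ^ 14 + X ^ 15 + X ^ 16 + X ^ 17 + X ^ 18 - X ^ 20 - X ^ 21 + X ^ 23 + X ^ 24 + X ^ 25 + X ^ 26 + X ^ 27 - X ^ 29 - X ^ 30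

lemma key_int : (X ^ 31 - 1 : Polynomial ℤ) = P10 * Qaux + 2 * Raux := by
  unfold P10 Qaux Raux
  ring

lemma P10_monic : P10.Monic := by
  unfold P10
  monicity!

lemma P10_natDegree : P10.natDegree = 10 := by
  unfold P10
  compute_degree!

lemma P10_eval_one : P10.eval 1 = -1 := by
  unfold P10; simp

theorem lehmer_mod_two_roots_primitive_31 :
    (∀ α : AlgebraicClosure (ZMod 2), P10bar.IsRoot α → orderOf α = 31) ∧
    P10bar.roots.Nodup ∧ Multiset.card P10bar.roots = 10 := by
  set K := AlgebraicClosure (ZMod 2) with hK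
  set f := Int.castRingHom K with hf
  have h2 : (2 : K) = 0 := by
    have := CharP.cast_eq_zero K 2
    exact_mod_cast this
  have key : (X ^ 31 - 1 : Polynomial K) = P10bar * (Qaux.map f) := by
    have h := congrArg (Polynomial.map f) key_int
    simp only [Polynomial.map_sub, Polynomial.map_add, Polynomial.map_mul, Polynomial.map_pow,
      Polynomial.map_X, Polynomial.map_one, Polynomial.map_ofNat] at h
    have h2p : (2 : Polynomial K) = 0 := by
      rw [← map_ofNat (C : K →+* Polynomial K) 2, h2, map_zero]
    rw [h, h2p]
    simp [P10bar]; exact Or.inl rfl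
  have hdvd : P10bar ∣ (X ^ 31 - 1 : Polynomial K) := ⟨Qaux.map f, key⟩
  have heval1 : P10bar.eval 1 ≠ 0 := by
    have : P10bar.eval 1 = f (P10.eval 1) := by
      rw [P10bar, eval_map, eval₂_at_one]
    rw [this, P10_eval_one]
    simp
  constructor
  · intro α hα
    have hpow : α ^ 31 = 1 := by
      have h0 : (X ^ 31 - 1 : Polynomial K).eval α = 0 := by
        rw [key]
        simp [hα.eq_zero]
      simpa [sub_eq_zero] using h0
    have hdvd31 : orderOf α ∣ 31 := orderOf_dvd_of_pow_eq_one hpow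
    have hp : Nat.Prime 31 := by norm_num
    rcases (Nat.Prime.eq_one_or_self_of_dvd hp _ hdvd31) with h1 | h31
    · exfalso
      have : α = 1 := orderOf_eq_one_iff.mp h1
      rw [this] at hα
      exact heval1 hα
    · exact h31
  · have hsep : (X ^ 31 - 1 : Polynomial K).Separable := by
      have h31K : (31 : K) ≠ 0 := by
        have h31 : (31 : K) = 1 := by linear_combination (15 : K) * h2
        rw [h31]; exact one_ne_zero
      have := Polynomial.separable_X_pow_sub_C (1 : K) (by exact_mod_cast h31K) one_ne_zero
      simpa using this
    have hsepP : P10bar.Separable := Polynomial.Separable.of_dvd hsep hdvd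
    refine ⟨Polynomial.nodup_roots hsepP, ?_⟩
    have hdeg : P10bar.natDegree = 10 :=
      (P10_monic.natDegree_map _).trans P10_natDegree
    rw [← hdeg]
    exact (Polynomial.splits_iff_card_roots).mp (IsAlgClosed.splits P10bar)
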